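/- For every squarefree integer D > 1, there exist positive integers m and n with m odd such that m² − D·n² = 1. Consequently, for every real quadratic field ℚ(√D) there exists a positive integer k such that the polynomial x² − (4(2k+1)² − 2)x + 1 is irreducible with splitting field ℚ(√D). -/

import Mathlib

open Polynomial

/-- For every squarefree integer D > 1 there are positive integers m, n with m odd and
m² − Dn² = 1; consequently there is a positive integer k such that
x² − (4(2k+1)² − 2)x + 1 is irreducible over ℚ with splitting field ℚ(√D). -/
theorem stmt9 (D : ℤ) (hD : 1 < D) (hsq : Squarefree D) :
    (∃ m n : ℤ, 0 < m ∧ 0 < n ∧ Odd m ∧ m ^ 2 - D * n ^ 2 = 1) ∧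
    ∃ k : ℕ, 0 < k ∧
      Irreducible (X ^ 2 - C (4 * (2 * (k : ℚ) + 1) ^ 2 - 2) * X + 1 : Polynomial ℚ) ∧
      Polynomial.IsSplittingField ℚ ↥(IntermediateField.adjoin ℚ {Real.sqrt (D : ℝ)})
        (X ^ 2 - C (4 * (2 * (k : ℚ) + 1) ^ 2 - 2) * X + 1) := by
  have hD0 : (0:ℤ) < D := by linarith
  have hDns : ¬ IsSquare D := by
    rintro ⟨a, rfl⟩
    have := hsq a ⟨1, by ring⟩
    have h1 : a = 1 ∨ a = -1 := Int.isUnit_iff.mp this |>.imp id id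
    rcases h1 with rfl | rfl <;> simp at hD <;> omega
  obtain ⟨x, y, hxy, hy⟩ := Pell.exists_of_not_isSquare hD0 hDns
  have hx : x ≠ 0 := by
    rintro rfl
    have : 0 < D * y ^ 2 := by positivity
    nlinarith
  have hx2 : 2 ≤ x ^ 2 := by
    have hx2'' : 0 < x ^ 2 := by positivity
    have hx2' : (1:ℤ) ≤ x ^ 2 := by linarith
    rcases eq_or_lt_of_le hx2' with h | h
    · exfalso
      have : D * y ^ 2 = 0 := by nlinarith
      have : y = 0 := by
        rcases mul_eq_zero.mp this with h' | h'
        · omega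
        · exact pow_eq_zero_iff (n := 2) (by norm_num) |>.mp h'
      exact hy this
    · omega
  set m : ℤ := x ^ 2 + D * y ^ 2 with hm_def
  set n : ℤ := 2 * |x| * |y| with hn_def
  have hDy : D * y ^ 2 = x ^ 2 - 1 := by linarith
  have hm_eq : m = 2 * x ^ 2 - 1 := by rw [hm_def, hDy]; ring
  have hmpos : 0 < m := by omega
  have hnpos : 0 < n := by
    have : 0 < |x| := abs_pos.mpr hx
    have : 0 < |y| := abs_pos.mpr hy
    positivity
  have hn2 : n ^ 2 = 4 * (x ^ 2 * y ^ 2) := by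
    rw [hn_def, mul_pow, mul_pow, sq_abs, sq_abs]; ring
  have hpell : m ^ 2 - D * n ^ 2 = 1 := by
    have h1 : m ^ 2 - D * n ^ 2 = (x ^ 2 - D * y ^ 2) ^ 2 := by
      rw [hm_def]; linear_combination (-D) * hn2
    rw [h1, hxy]; norm_num
  have hodd : Odd m := ⟨x ^ 2 - 1, by omega⟩
  refine ⟨?_, ?_⟩
  · exact ⟨m, n, hmpos, hnpos, hodd, hpell⟩
  -- part 2
  set k : ℕ := (x ^ 2 - 1).toNat with hk_def
  have hk : (k : ℤ) = x ^ 2 - 1 := Int.toNat_of_nonneg (by omega)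
  have hkpos : 0 < k := by omega
  have hmk : m = 2 * (k : ℤ) + 1 := by omega
  refine ⟨k, hkpos, ?_⟩
  set t : ℚ := 4 * (2 * (k : ℚ) + 1) ^ 2 - 2 with ht_def
  set p : ℚ[X] := X ^ 2 - C t * X + 1 with hp_def
  have hmQ : (m : ℚ) = 2 * (k : ℚ) + 1 := by exact_mod_cast congrArg (Int.cast : ℤ → ℚ) hmk
  have hpq : (m : ℚ) ^ 2 - (D : ℚ) * (n : ℚ) ^ 2 = 1 := by exact_mod_cast hpell
  have ht : t = 4 * (m : ℚ) ^ 2 - 2 := by rw [ht_def, hmQ]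
  have hmn0 : (4 : ℚ) * m * n ≠ 0 := by
    have h1 : (m:ℚ) ≠ 0 := by exact_mod_cast hmpos.ne'
    have h2 : (n:ℚ) ≠ 0 := by exact_mod_cast hnpos.ne'
    positivity
  have hdisc : t ^ 2 - 4 = (4 * (m:ℚ) * n) ^ 2 * D := by
    rw [ht]; linear_combination (16 * (m:ℚ)^2) * hpq
  have hp_eq : p = C 1 * X ^ 2 + C (-t) * X + C 1 := by
    rw [hp_def]; simp only [map_one, map_neg]; ring
  have hpdeg : p.natDegree = 2 := by
    rw [hp_eq]; exact natDegree_quadratic one_ne_zero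
  have hpmonic : p.Monic := by
    rw [Monic, hp_eq]
    exact leadingCoeff_quadratic one_ne_zero
  have hirr : Irreducible p := by
    rw [irreducible_iff_roots_eq_zero_of_degree_le_three (by omega) (by omega)]
    rw [Multiset.eq_zero_iff_forall_notMem]
    intro r hr
    have hroot : r ^ 2 - t * r + 1 = 0 := by
      have h0 : eval r p = 0 := (mem_roots hpmonic.ne_zero).mp hr
      simpa [hp_def] using h0
    apply hDns
    rw [← Rat.isSquare_intCast_iff]
    refine ⟨(2 * r - t) / (4 * m * n), ?_⟩
    have h2 : (2 * r - t) ^ 2 = (4 * (m:ℚ) * n) ^ 2 * (D:ℚ) := by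
      rw [← hdisc]; linear_combination 4 * hroot
    have h3 : ((2*r-t)/(4*(m:ℚ)*n)) * ((2*r-t)/(4*(m:ℚ)*n)) = (2*r-t)^2 / ((4*(m:ℚ)*n)^2) := by
      ring
    rw [h3, h2, mul_comm, mul_div_assoc, div_self (pow_ne_zero 2 hmn0), mul_one]
  refine ⟨hirr, ?_⟩
  set s : ℝ := Real.sqrt (D : ℝ) with hs_def
  have hs2 : s * s = (D : ℝ) := Real.mul_self_sqrt (by exact_mod_cast hD0.le)
  set cQ : ℚ := 4 * m * n with hc_def
  have hcQ0 : cQ ≠ 0 := hmn0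
  set α : ℝ := ((t / 2 : ℚ) : ℝ) + ((cQ / 2 : ℚ) : ℝ) * s with hα_def
  set β : ℝ := ((t / 2 : ℚ) : ℝ) - ((cQ / 2 : ℚ) : ℝ) * s with hβ_def
  have hsum : α + β = ((t : ℚ) : ℝ) := by rw [hα_def, hβ_def]; push_cast; ring
  have hdiscR : ((t:ℚ):ℝ) ^ 2 - 4 = ((cQ:ℚ):ℝ) ^ 2 * ((D:ℤ):ℝ) := by exact_mod_cast hdisc
  have hprod : α * β = 1 := by
    rw [hα_def, hβ_def]
    push_cast at hdiscR ⊢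
    nlinarith [hs2, hdiscR]
  have hfac : p.map (algebraMap ℚ ℝ) = (X - C α) * (X - C β) := by
    have he : (X - C α) * (X - C β) = X ^ 2 - C (α + β) * X + C (α * β) := by
      simp only [C_add, C_mul]; ring
    rw [he, hsum, hprod, hp_def]
    simp [Polynomial.map_ofNat]
  have hsplits : (p.map (algebraMap ℚ ℝ)).Splits := by
    rw [hfac]
    exact (Splits.X_sub_C _).mul (Splits.X_sub_C _)
  have hinst := IntermediateField.adjoin_rootSet_isSplittingField (K := ℚ) (L := ℝ) hsplits
  have hαmem : α ∈ p.rootSet ℝ := by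
    rw [mem_rootSet]
    refine ⟨hpmonic.ne_zero, ?_⟩
    have he : (Polynomial.aeval α) p = ((p.map (algebraMap ℚ ℝ)).eval α) := by
      rw [aeval_def, eval_map]
    rw [he, hfac]
    simp
  have hroots : IntermediateField.adjoin ℚ (p.rootSet ℝ) = IntermediateField.adjoin ℚ {s} := by
    apply le_antisymm
    · rw [IntermediateField.adjoin_le_iff]
      intro r hr
      have h2 : (Polynomial.aeval r) p = ((p.map (algebraMap ℚ ℝ)).eval r) := by
        rw [aeval_def, eval_map]
      have hr0 : (r - α) * (r - β) = 0 := by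
        have h1 := (mem_rootSet.mp hr).2
        rw [h2, hfac] at h1
        simpa using h1
      have hs_mem : s ∈ IntermediateField.adjoin ℚ {s} :=
        IntermediateField.mem_adjoin_simple_self ℚ s
      have hαm : α ∈ IntermediateField.adjoin ℚ {s} := by
        rw [hα_def]
        exact add_mem (SubfieldClass.ratCast_mem _ _)
          (mul_mem (SubfieldClass.ratCast_mem _ _) hs_mem)
      have hβm : β ∈ IntermediateField.adjoin ℚ {s} := by
        rw [hβ_def]
        exact sub_mem (SubfieldClass.ratCast_mem _ _)
          (mul_mem (SubfieldClass.ratCast_mem _ _) hs_mem)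
      rcases mul_eq_zero.mp hr0 with h | h
      · rw [sub_eq_zero] at h; rw [h]; exact hαm
      · rw [sub_eq_zero] at h; rw [h]; exact hβm
    · rw [IntermediateField.adjoin_le_iff]
      intro z hz
      rw [Set.mem_singleton_iff] at hz
      subst hz
      have hα_in : α ∈ IntermediateField.adjoin ℚ (p.rootSet ℝ) :=
        IntermediateField.subset_adjoin ℚ _ hαmem
      have hseq : s = ((2 / cQ : ℚ) : ℝ) * α - ((t / cQ : ℚ) : ℝ) := by
        have hcR : ((cQ:ℚ):ℝ) ≠ 0 := by exact_mod_cast hcQ0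
        rw [hα_def]
        push_cast
        field_simp
        ring
      rw [hseq]
      exact sub_mem (mul_mem (SubfieldClass.ratCast_mem _ _) hα_in)
        (SubfieldClass.ratCast_mem _ _)
  rw [hroots] at hinst
  exact hinst
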